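/- Let A = ℤ_{(P)}[ζ_m] with m coprime to the primes in P, let M = [ℚ(ζ_m):ℚ], and let φ_p be the automorphism of the p-adic completion A^ of A induced by ζ_m ↦ ζ_m^p. Then for any prime p ∈ P and any β ∈ A^ with (φ_p - p)β = 0, we have β = 0. -/
import Mathlib


/-- Let `A = ℤ_{(P)}[ζ_m]` with `m` coprime to the primes in `P`,
`M = [ℚ(ζ_m):ℚ] = φ(m)`, and `φ_p` the automorphism of the `p`-adic completion
`A^` induced by `ζ_m ↦ ζ_m^p`. Then `(φ_p - p)β = 0` forces `β = 0`.
(The completion `A^` is modelled by a torsion-free commutative ring `R`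
equipped with the endomorphism `φ` of order dividing `M = φ(m)`.) -/
theorem stmt_13 (p m : ℕ) (hp : p.Prime) (hm : 0 < m)
    (hcop : Nat.Coprime p m)
    (R : Type*) [CommRing R]
    (htf : ∀ n : ℤ, n ≠ 0 → ∀ x : R, n • x = 0 → x = 0)
    (φ : R →+* R)
    (hφM : ∀ x : R, (⇑φ)^[Nat.totient m] x = x) :
    ∀ β : R, φ β = (p : R) * β → β = 0 := by
  intro β hβ
  have hit : ∀ k : ℕ, (⇑φ)^[k] β = (p : R) ^ k * β := by
    intro k
    induction k with
    | zero => simp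
    | succ k ih =>
      rw [Function.iterate_succ_apply', ih, map_mul, map_pow, hβ, map_natCast]
      ring
  have hM : β = (p : R) ^ Nat.totient m * β := by
    rw [← hit, hφM]
  have hzero : ((p : ℤ) ^ Nat.totient m - 1) • β = 0 := by
    rw [sub_smul, one_smul, zsmul_eq_mul]
    push_cast
    rw [← hM]
    ring
  refine htf _ ?_ _ hzero
  have hp2 : (1 : ℤ) < (p : ℤ) := by exact_mod_cast hp.one_lt
  have ht : 0 < Nat.totient m := Nat.totient_pos.mpr hm
  have h1 : (1:ℤ) < (p : ℤ) ^ Nat.totient m := one_lt_pow₀ hp2 ht.ne'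
  exact sub_ne_zero.mpr h1.ne'
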